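/- Every finite-by-abelian group is nilpotent-of-class-at-most-2-by-finite: if G' is finite, then H := C_G(G') has finite index in G and H is nilpotent of class at most 2. -/

import Mathlib

open Subgroup
open scoped commutatorElement

lemma centralizer_singleton_finiteIndex {G : Type*} [Group G]
    (h : Finite (commutator G)) (g : G) :
    (Subgroup.centralizer ({g} : Set G)).FiniteIndex := by
  have horb : MulAction.orbit (ConjAct G) g ⊆ (fun x => x * g) '' (commutator G : Set G) := by
    rintro _ ⟨c, rfl⟩
    refine ⟨(⁅ConjAct.ofConjAct c, g⁆ : G), commutator_mem_commutator (mem_top _) (mem_top _), ?_⟩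
    simp [ConjAct.smul_def, commutatorElement_def, mul_assoc]
  have hfin : (MulAction.orbit (ConjAct G) g).Finite :=
    Set.Finite.subset (Set.Finite.image _ (Set.toFinite _)) horb
  have hstab : (MulAction.stabilizer (ConjAct G) g).FiniteIndex := by
    constructor
    rw [MulAction.index_stabilizer]
    have : (MulAction.orbit (ConjAct G) g).Nonempty := ⟨g, MulAction.mem_orbit_self g⟩
    exact (Set.ncard_pos hfin).mpr this |>.ne'
  rw [Subgroup.centralizer_eq_comap_stabilizer]
  constructor
  exact ((MulAction.stabilizer (ConjAct G) g).index_comap_of_surjective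
    (f := ConjAct.toConjAct.toMonoidHom) ConjAct.toConjAct.surjective).trans_ne hstab.index_ne_zero

theorem finite_by_abelian_is_nilpotent2_by_finite {G : Type*} [Group G]
    (h : Finite (commutator G)) :
    (Subgroup.centralizer (commutator G : Set G)).FiniteIndex ∧
    _root_.lowerCentralSeries (Subgroup.centralizer (commutator G : Set G)) 2 = ⊥ := by
  constructor
  · have heq : Subgroup.centralizer (commutator G : Set G) =
        ⨅ g : (commutator G : Set G), Subgroup.centralizer ({(g : G)} : Set G) := by
      ext x
      constructor
      · intro hx
        rw [Subgroup.mem_centralizer_iff] at hx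
        rw [Subgroup.mem_iInf]
        rintro ⟨g, hg⟩
        rw [Subgroup.mem_centralizer_iff]
        rintro y hy
        rw [Set.mem_singleton_iff] at hy
        subst hy
        exact hx _ hg
      · intro hx
        rw [Subgroup.mem_centralizer_iff]
        intro g hg
        rw [Subgroup.mem_iInf] at hx
        have := hx ⟨g, hg⟩
        rw [Subgroup.mem_centralizer_iff] at this
        exact this g rfl
    rw [heq]
    exact Subgroup.finiteIndex_iInf fun g => centralizer_singleton_finiteIndex h g
  · set H := Subgroup.centralizer (commutator G : Set G) with hH
    show ⁅⁅H, H⁆, H⁆ = ⊥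
    rw [Subgroup.commutator_eq_bot_iff_le_centralizer]
    intro x hx
    have hx' : x ∈ commutator G := Subgroup.commutator_mono le_top le_top hx
    rw [Subgroup.mem_centralizer_iff]
    intro c hc
    exact (hc x hx').symm
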